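/- With the hypotheses of the loops construction (f ∈ z·ℤ≥0[[z]], nondecreasing (r_k) → ∞ satisfying the positivity condition, R_n = #{k : r_k = n}, and f^{<∞>} the coefficientwise limit of the f^{(k)}), the formal power series identity 1 − f^{<∞>}(z) = (1 − f(z)) / ∏_{n=1}^∞ (1 − z^n)^{R_n} holds. -/

import Mathlib

open PowerSeries

/-- In the loops construction (`f ∈ z·ℤ≥0[[z]]`, nondecreasing
`(r_k) → ∞` with the positivity condition, `R_n = #{k : r_k = n}`, and
`f^{<∞>}` the coefficientwise limit of the stages `f^{(k)}`), the formal power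
series identity `1 − f^{<∞>} = (1 − f) / ∏_{n≥1} (1 − z^n)^{R_n}` holds;
equivalently, for every `N` the coefficients of degree `≤ N` of
`(1 − f^{<∞>})·∏_{n=1}^{N}(1 − z^n)^{R_n}` and of `1 − f` agree
(factors with `n > N` do not affect these coefficients). -/
lemma aux_prod_sub_one {s : ℕ} (t : Finset ℕ) (g : ℕ → PowerSeries ℚ)
    (h : ∀ a ∈ t, (X:PowerSeries ℚ)^s ∣ (g a - 1)) :
    (X:PowerSeries ℚ)^s ∣ (∏ a ∈ t, g a) - 1 := by
  classical
  induction t using Finset.induction_on with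
  | empty => simp
  | @insert a t ha ih =>
    rw [Finset.prod_insert ha]
    have h1 := h a (Finset.mem_insert_self a t)
    have h2 := ih fun b hb => h b (Finset.mem_insert_of_mem hb)
    have : g a * ∏ b ∈ t, g b - 1 = g a * ((∏ b ∈ t, g b) - 1) + (g a - 1) := by ring
    rw [this]
    exact dvd_add (Dvd.dvd.mul_left h2 _) h1

theorem stmt6 (f : PowerSeries ℚ) (F : ℕ → PowerSeries ℚ) (r : ℕ → ℕ)
    (R : ℕ → ℕ) (finf : ℕ → ℕ)
    (hf0 : PowerSeries.constantCoeff (R := ℚ) f = 0)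
    (hfnat : ∀ n, ∃ m : ℕ, PowerSeries.coeff (R := ℚ) n f = m)
    (hrpos : ∀ k, 0 < r k) (hrmono : Monotone r)
    (hrtop : Filter.Tendsto r Filter.atTop Filter.atTop)
    (hF0 : F 0 = f)
    (hFrec : ∀ k, 1 - F (k + 1) = (1 - F k) * (1 - X ^ r k)⁻¹)
    (hpos : ∀ k, 1 ≤ PowerSeries.coeff (R := ℚ) (r k) (F k))
    (hRfin : ∀ n, {k | r k = n}.Finite)
    (hR : ∀ n, R n = Nat.card {k | r k = n})
    (hstab : ∀ n, ∃ K, ∀ k, K ≤ k → PowerSeries.coeff (R := ℚ) n (F k) = (finf n : ℚ)) :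
    ∀ N : ℕ, ∀ m ≤ N,
      PowerSeries.coeff (R := ℚ) m
        ((1 - PowerSeries.mk fun n => (finf n : ℚ)) *
          ∏ n ∈ Finset.Icc 1 N, (1 - X ^ n) ^ R n) =
      PowerSeries.coeff (R := ℚ) m (1 - f) := by
  classical
  intro N m hm
  -- units
  have hunit : ∀ k, constantCoeff (R := ℚ) (1 - X ^ r k) ≠ 0 := by
    intro k
    have : constantCoeff (R := ℚ) ((X:PowerSeries ℚ) ^ r k) = 0 := by
      rw [map_pow, constantCoeff_X, zero_pow (hrpos k).ne']
    simp [this]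
  -- key telescoping identity
  have key : ∀ K, (1 - F K) * ∏ k ∈ Finset.range K, (1 - X ^ r k) = 1 - f := by
    intro K
    induction K with
    | zero => simp [hF0]
    | succ K ih =>
      rw [Finset.prod_range_succ, ← mul_assoc]
      have step : (1 - F (K + 1)) * (1 - X ^ r K) = 1 - F K := by
        rw [hFrec K, mul_assoc, PowerSeries.inv_mul_cancel _ (hunit K), mul_one]
      rw [mul_right_comm, step, ih]
  -- choose K large
  obtain ⟨K0, hK0⟩ := Filter.eventually_atTop.mp (Filter.tendsto_atTop.mp hrtop (N+1))
  set K := max K0 (Finset.sup (Finset.range (N+1)) fun n => (hstab n).choose) with hKdef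
  have hKstab : ∀ n ≤ N, PowerSeries.coeff (R := ℚ) n (F K) = (finf n : ℚ) := by
    intro n hn
    exact (hstab n).choose_spec K
      (le_trans (Finset.le_sup (f := fun n => (hstab n).choose)
        (Finset.mem_range.mpr (by omega))) (le_max_right _ _))
  have hK0K : K0 ≤ K := le_max_left _ _
  set S := (Finset.range K).filter (fun k => r k ≤ N) with hS
  set T := (Finset.range K).filter (fun k => ¬ r k ≤ N) with hT
  set P := ∏ k ∈ Finset.range K, (1 - (X:PowerSeries ℚ) ^ r k) with hP
  set B := ∏ n ∈ Finset.Icc 1 N, (1 - (X:PowerSeries ℚ) ^ n) ^ R n with hB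
  have hsplit : P = (∏ k ∈ S, (1 - (X:PowerSeries ℚ) ^ r k)) *
      ∏ k ∈ T, (1 - (X:PowerSeries ℚ) ^ r k) :=
    (Finset.prod_filter_mul_prod_filter_not _ _ _).symm
  -- S-product equals B
  have hSB : (∏ k ∈ S, (1 - (X:PowerSeries ℚ) ^ r k)) = B := by
    have hmaps : ∀ k ∈ S, r k ∈ Finset.Icc 1 N := by
      intro k hk
      rw [hS, Finset.mem_filter] at hk
      exact Finset.mem_Icc.mpr ⟨hrpos k, hk.2⟩
    rw [← Finset.prod_fiberwise_of_maps_to' hmaps (fun n => 1 - (X:PowerSeries ℚ) ^ n)]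
    refine Finset.prod_congr rfl fun n hn => ?_
    rw [Finset.prod_const]
    congr 1
    have hnN : n ≤ N := (Finset.mem_Icc.mp hn).2
    have hfin : S.filter (fun k => r k = n) = (hRfin n).toFinset := by
      ext k
      simp only [hS, Finset.mem_filter, Finset.mem_range, Set.Finite.mem_toFinset,
        Set.mem_setOf_eq, and_assoc]
      constructor
      · tauto
      · intro h
        have hk : k < K0 := by
          by_contra hc
          have := hK0 k (le_of_not_gt hc)
          omega
        exact ⟨by omega, by omega, h⟩
    rw [hfin, hR n, Nat.card_coe_set_eq, Set.ncard_eq_toFinset_card _ (hRfin n)]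
  -- T-product is ≡ 1
  have hTdvd : (X:PowerSeries ℚ)^(N+1) ∣ (∏ k ∈ T, (1 - (X:PowerSeries ℚ) ^ r k)) - 1 := by
    apply aux_prod_sub_one
    intro k hk
    rw [hT, Finset.mem_filter] at hk
    have : (1:PowerSeries ℚ) - X ^ r k - 1 = -(X ^ r k) := by ring
    rw [this]
    exact (pow_dvd_pow _ (by omega)).neg_right
  -- stability divisibility
  have hAdvd : (X:PowerSeries ℚ)^(N+1) ∣
      (1 - PowerSeries.mk fun n => (finf n : ℚ)) - (1 - F K) := by
    rw [PowerSeries.X_pow_dvd_iff]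
    intro i hi
    simp only [map_sub, PowerSeries.coeff_mk, PowerSeries.coeff_one]
    rw [hKstab i (by omega)]
    ring
  -- combine
  have hmain : (X:PowerSeries ℚ)^(N+1) ∣
      (1 - PowerSeries.mk fun n => (finf n : ℚ)) * B - (1 - f) := by
    have hkey := key K
    rw [← hP] at hkey
    rw [← hkey, hsplit, hSB]
    have : (1 - PowerSeries.mk fun n => (finf n : ℚ)) * B -
        (1 - F K) * (B * ∏ k ∈ T, (1 - (X:PowerSeries ℚ) ^ r k)) =
        ((1 - PowerSeries.mk fun n => (finf n : ℚ)) - (1 - F K)) * B -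
        (1 - F K) * B * ((∏ k ∈ T, (1 - (X:PowerSeries ℚ) ^ r k)) - 1) := by ring
    rw [this]
    exact dvd_sub (hAdvd.mul_right _) (hTdvd.mul_left _)
  rw [PowerSeries.X_pow_dvd_iff] at hmain
  have := hmain m (by omega)
  rw [map_sub, sub_eq_zero] at this
  exact this
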